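/- Let φ : R → S be a ring homomorphism such that S is free as an R-module with a basis containing the element 1. Then the sequence 0 → R → S → S ⊗_R S is exact, where the second map is φ and the third map sends α to α ⊗ 1 − 1 ⊗ α. In particular, φ(R) is strictly closed in S. -/

import Mathlib

open scoped TensorProduct

/-- The strict closure of `R` in `S`. -/
def strictClosure (R : Type*) [CommRing R] (S : Type*) [CommRing S] [Algebra R S] : Set S :=
  {α : S | α ⊗ₜ[R] (1 : S) = (1 : S) ⊗ₜ[R] α}

/-- If `S` is a free `R`-module with a basis containing `1`, then
`0 → R → S → S ⊗_R S` is exact (the last map being `α ↦ α ⊗ 1 − 1 ⊗ α`);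
in particular `φ(R)` is strictly closed in `S`. -/
theorem strictlyClosed_of_free_basis_with_one (R S : Type*) [CommRing R] [CommRing S]
    [Algebra R S] {ι : Type*} (b : Module.Basis ι R S) (i₀ : ι) (hb : b i₀ = 1) :
    Function.Injective (algebraMap R S) ∧
      strictClosure R S = Set.range (algebraMap R S) := by
  have hrepr1 : b.repr 1 = Finsupp.single i₀ 1 := by
    rw [← hb, b.repr_self]
  constructor
  · intro r r' h
    have h1 : r • (1 : S) = r' • (1 : S) := by
      rw [Algebra.algebraMap_eq_smul_one] at h
      rw [Algebra.algebraMap_eq_smul_one] at h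
      exact h
    have := congrArg (fun s => b.repr s i₀) h1
    simpa [hrepr1] using this
  · ext α
    simp only [strictClosure, Set.mem_setOf_eq, Set.mem_range]
    constructor
    · intro h
      have h2 := congrArg ((Module.Basis.tensorProduct b b).repr) h
      refine ⟨b.repr α i₀, ?_⟩
      have hcoef : ∀ i j, b.repr (1 : S) j * b.repr α i = b.repr α j * b.repr (1 : S) i := by
        intro i j
        have := congrArg (fun f => f (i, j)) h2
        simpa [Module.Basis.tensorProduct_repr_tmul_apply] using this
      have hzero : ∀ i, i ≠ i₀ → b.repr α i = 0 := by
        intro i hi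
        have := hcoef i i₀
        simpa [hrepr1, Finsupp.single_apply, Ne.symm hi] using this
      have : α = b.repr α i₀ • b i₀ := by
        conv_lhs => rw [← b.linearCombination_repr α]
        rw [Finsupp.linearCombination_apply, Finsupp.sum]
        rw [Finset.sum_eq_single i₀]
        · intro j hj hne
          rw [hzero j hne, zero_smul]
        · intro hni
          rw [Finsupp.notMem_support_iff.mp hni, zero_smul]
      rw [hb] at this
      rw [Algebra.algebraMap_eq_smul_one]
      exact this.symm
    · rintro ⟨r, rfl⟩
      rw [Algebra.algebraMap_eq_smul_one]
      rw [TensorProduct.smul_tmul, TensorProduct.tmul_smul]
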